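/- Let A, B and W be finite nonempty sets and let f : A × B × W → ℝ be a nonnegative function with Σ f > 0 that does not depend on its second argument, i.e., f(a,b,w) = f(a,b',w) for all a, b, b', w (interpreted as: the variables indexed by B are not parents of the outcome y, so they are unconstrained by y). Define cause probabilities π((a,b)|y) = Σ_w f(a,b,w) / Σ_{a',b',w} f(a',b',w) with π((a,b)) = (|A|·|B|)^{-1}, and π(a|y) = Σ_{b,w} f(a,b,w) / Σ_{a',b',w} f(a',b',w) with π(a) = |A|^{-1}. Then for every (a,b) with Σ_w f(a,b,w) > 0, the cause ratio is unchanged by adding the unconstrained variables: log₂(π((a,b)|y)/π((a,b))) = log₂(π(a|y)/π(a)). -/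

import Mathlib

/-- Adding unconstrained variables to a candidate cause does not change the cause ratio.
Inputs are split into candidate-cause states `a ∈ A`, additional variables `b ∈ B` on which the
outcome does not depend (`f a b w = f a b' w`), and marginalized remaining inputs `w ∈ W`, with
`f a b w = p(y | do(a, b, w))`, all weighted uniformly. Then for every `(a, b)` with
`Σ_w f a b w > 0`, `log₂(π((a,b)|y)/π((a,b))) = log₂(π(a|y)/π(a))`, where
`π((a,b)|y) = Σ_w f a b w / Σ f` with `π((a,b)) = (|A||B|)⁻¹`, and
`π(a|y) = Σ_{b,w} f a b w / Σ f` with `π(a) = |A|⁻¹`. -/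
theorem cause_ratio_unchanged_by_unconstrained_variables
    {A B W : Type*} [Fintype A] [Fintype B] [Fintype W]
    [Nonempty A] [Nonempty B] [Nonempty W]
    (f : A → B → W → ℝ) (hf : ∀ a b w, 0 ≤ f a b w)
    (hpos : 0 < ∑ a : A, ∑ b : B, ∑ w : W, f a b w)
    (hunconstrained : ∀ a b b' w, f a b w = f a b' w)
    (a : A) (b : B) (hab : 0 < ∑ w : W, f a b w) :
    Real.logb 2 (((∑ w : W, f a b w) / ∑ a' : A, ∑ b' : B, ∑ w : W, f a' b' w) /
        (((Fintype.card A : ℝ)) * ((Fintype.card B : ℝ)))⁻¹) =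
      Real.logb 2 (((∑ b' : B, ∑ w : W, f a b' w) /
          ∑ a' : A, ∑ b' : B, ∑ w : W, f a' b' w) /
        ((Fintype.card A : ℝ))⁻¹) := by
  have hB : ∑ b' : B, ∑ w : W, f a b' w = (Fintype.card B : ℝ) * ∑ w : W, f a b w := by
    rw [Finset.sum_congr rfl (fun b' _ => by
      exact Finset.sum_congr rfl (fun w _ => (hunconstrained a b' b w)))]
    simp [Finset.sum_const, nsmul_eq_mul]
  rw [hB]
  congr 1
  field_simp
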